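/- Let I be a set and F a filter on I that is not an ultrafilter. If a T1 topological space X with more than one point exists, then X does not satisfy the F-accumulation property; i.e., a T1 space with at least two points satisfying the F-accumulation property forces F to be an ultrafilter. -/

import Mathlib

/-- `z` is an `E`-accumulation point of the `I`-indexed sequence `x`. -/
def IsAccPt {I X : Type*} [TopologicalSpace X] (E : Set (Set I)) (x : I → X) (z : X) : Prop :=
  ∀ U : Set X, IsOpen U → z ∈ U → {i | x i ∈ U} ∈ E

/-- `X` satisfies the `E`-accumulation property. -/
def AccProp {I : Type*} (X : Type*) [TopologicalSpace X] (E : Set (Set I)) : Prop :=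
  ∀ x : I → X, ∃ z : X, IsAccPt E x z

/-- A filter in the classical sense: a nonempty proper family closed under
finite intersections and supersets. -/
structure IsSetFilter {I : Type*} (F : Set (Set I)) : Prop where
  nonempty : F.Nonempty
  proper : (∅ : Set I) ∉ F
  inter : ∀ A ∈ F, ∀ B ∈ F, A ∩ B ∈ F
  mono : ∀ A ∈ F, ∀ B : Set I, A ⊆ B → B ∈ F

/-- A (set-)ultrafilter: a filter containing one of `J`, `Jᶜ` for every `J`. -/
def IsSetUltrafilter {I : Type*} (F : Set (Set I)) : Prop :=
  IsSetFilter F ∧ ∀ J : Set I, J ∈ F ∨ Jᶜ ∈ F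

/-- The order type of a subset of a well-ordered type, with the inherited order. -/
noncomputable def setOType {β : Type*} [LinearOrder β] [WellFoundedLT β] (S : Set β) : Ordinal :=
  Ordinal.type ((· < ·) : S → S → Prop)

/-- `X` satisfies the `α`-complete accumulation property `CAP*_α`: every `α`-indexed
sequence has a point all of whose open neighborhoods pick out a set of indices of
order type `α`. -/
def CAPstar (α : Ordinal) (X : Type*) [TopologicalSpace X] : Prop :=
  ∀ x : α.ToType → X, ∃ z : X, ∀ U : Set X, IsOpen U → z ∈ U →
    setOType {γ : α.ToType | x γ ∈ U} = α

theorem stmt17 {I : Type*} (F : Set (Set I)) (hF : IsSetFilter F)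
    (X : Type*) [TopologicalSpace X] [T1Space X] (hX : Nontrivial X)
    (h : AccProp X F) :
    ∀ J : Set I, J ∈ F ∨ Jᶜ ∈ F := by
  classical
  intro J
  obtain ⟨a, b, hab⟩ := hX
  set x : I → X := fun i => if i ∈ J then a else b with hx
  obtain ⟨z, hz⟩ := h x
  by_cases hza : z = a
  · left
    obtain ⟨U, hU, haU, hbU⟩ := t1Space_iff_exists_open.mp ‹T1Space X› hab
    have := hz U hU (hza ▸ haU)
    refine hF.mono _ this J ?_
    intro i hi
    by_contra hiJ
    simp only [Set.mem_setOf_eq, hx, if_neg hiJ] at hi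
    exact hbU hi
  · right
    obtain ⟨U, hU, hzU, haU⟩ := t1Space_iff_exists_open.mp ‹T1Space X› hza
    have := hz U hU hzU
    refine hF.mono _ this Jᶜ ?_
    intro i hi
    intro hiJ
    simp only [Set.mem_setOf_eq, hx, if_pos hiJ] at hi
    exact haU hi
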